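/- Let (Ω, 𝔉, μ) be a probability space, (E_m)_{m≥1} an i.i.d. sequence of exponential random variables with rate 1, and W = (2/π²) Σ_{m=1}^∞ E_m/(2m−1)². Then for every t ≥ 0, E[e^{−tW}] = ∏_{m=1}^∞ (1 + 2t/(π²(2m−1)²))^{−1}, and the product is multipliable. -/

import Mathlib

open MeasureTheory ProbabilityTheory Real Set
open scoped ENNReal NNReal

lemma measurable_expPDF (r : ℝ) : Measurable (exponentialPDF r) :=
  (measurable_exponentialPDFReal r).ennreal_ofReal

lemma exp_laplace {s : ℝ} (hs : 0 ≤ s) :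
    ∫ x, Real.exp (-(s * x)) ∂(expMeasure 1) = (1 + s)⁻¹ := by
  have h1s : (0:ℝ) < 1 + s := by linarith
  have hexp : expMeasure 1 = volume.withDensity (exponentialPDF 1) := rfl
  have hmr : Measurable fun x : ℝ => Real.exp (-(s * x)) :=
    ((measurable_id.const_mul s).neg).exp
  have hm : Measurable fun x : ℝ => ENNReal.ofReal (Real.exp (-(s * x))) :=
    hmr.ennreal_ofReal
  rw [integral_eq_lintegral_of_nonneg_ae (ae_of_all _ fun x => (Real.exp_pos _).le)
      hmr.aestronglyMeasurable]
  rw [hexp, lintegral_withDensity_eq_lintegral_mul _ (measurable_expPDF 1) hm]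
  have key : ∀ x : ℝ, (exponentialPDF 1 * fun x => ENNReal.ofReal (Real.exp (-(s * x)))) x
      = ENNReal.ofReal (1 + s)⁻¹ * exponentialPDF (1 + s) x := by
    intro x
    simp only [Pi.mul_apply]
    rcases lt_or_ge x 0 with hx | hx
    · rw [exponentialPDF_of_neg hx, exponentialPDF_of_neg hx, zero_mul, mul_zero]
    · rw [exponentialPDF_of_nonneg hx, exponentialPDF_of_nonneg hx,
        ← ENNReal.ofReal_mul (by positivity), ← ENNReal.ofReal_mul (by positivity)]
      congr 1
      rw [one_mul, ← Real.exp_add, inv_mul_eq_div, mul_comm ((1:ℝ)+s), mul_div_assoc,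
        div_self h1s.ne', mul_one]
      ring_nf
  simp_rw [key]
  rw [lintegral_const_mul _ (measurable_expPDF (1+s)),
    lintegral_exponentialPDF_eq_one h1s, mul_one, ENNReal.toReal_ofReal (by positivity)]

lemma exp_lintegral_nnnorm : ∫⁻ x, (‖x‖₊ : ℝ≥0∞) ∂(expMeasure 1) = 1 := by
  have hexp : expMeasure 1 = volume.withDensity (exponentialPDF 1) := rfl
  rw [hexp, lintegral_withDensity_eq_lintegral_mul _
      (measurable_expPDF 1) measurable_nnnorm.coe_nnreal_ennreal]
  have key : ∀ x : ℝ, (exponentialPDF 1 * (fun x : ℝ => (‖x‖₊ : ℝ≥0∞))) x = gammaPDF 2 1 x := by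
    intro x
    simp only [Pi.mul_apply]
    rcases lt_or_ge x 0 with hx | hx
    · rw [exponentialPDF_of_neg hx, gammaPDF_of_neg hx, zero_mul]
    · rw [exponentialPDF_of_nonneg hx, gammaPDF_of_nonneg hx,
        (by exact Real.enorm_eq_ofReal hx : (‖x‖₊ : ℝ≥0∞) = ENNReal.ofReal x), ← ENNReal.ofReal_mul (by positivity)]
      congr 1
      rw [Real.Gamma_two]
      norm_num
      ring
  simp_rw [key]
  exact lintegral_gammaPDF_eq_one two_pos one_pos

-- exponential r.v. are a.e. nonneg
lemma exp_ae_nonneg : ∀ᵐ x ∂(expMeasure 1), 0 ≤ x := by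
  have hexp : expMeasure 1 = volume.withDensity (exponentialPDF 1) := rfl
  rw [ae_iff]
  have : {x : ℝ | ¬ 0 ≤ x} = Iio 0 := by ext x; simp [not_le]
  rw [this, hexp, withDensity_apply _ measurableSet_Iio]
  exact lintegral_exponentialPDF_of_nonpos le_rfl

lemma summable_inv_sq' : Summable (fun m : ℕ => (((2:ℝ)*m+1)^2)⁻¹) := by
  have h1 : Summable (fun n : ℕ => 1/(((n+1:ℕ)):ℝ)^2) :=
    (summable_nat_add_iff (f := fun n : ℕ => 1/((n:ℝ))^2) 1).mpr
      (Real.summable_one_div_nat_pow.mpr one_lt_two)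
  apply Summable.of_nonneg_of_le (fun m => by positivity) (fun m => ?_) h1
  rw [one_div]
  apply inv_anti₀ (by positivity)
  push_cast
  nlinarith [Nat.cast_nonneg (α := ℝ) m]

lemma multipliable_aux {c : ℕ → ℝ} (hc : ∀ m, 0 ≤ c m) (hsum : Summable c) :
    Multipliable (fun m => (1 + c m)⁻¹) := by
  have hpos : ∀ m, (0:ℝ) < 1 + c m := fun m => by linarith [hc m]
  have hlog : Summable (fun m => Real.log (1 + c m)) := by
    apply Summable.of_nonneg_of_le (fun m => Real.log_nonneg (by linarith [hc m]))
      (fun m => ?_) hsum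
    have := Real.log_le_sub_one_of_pos (hpos m)
    linarith
  have hp := hlog.neg.hasSum.rexp
  have heq : (rexp ∘ fun m => -Real.log (1 + c m)) = fun m => (1 + c m)⁻¹ := by
    funext m
    simp only [Function.comp_apply, Real.exp_neg, Real.exp_log (hpos m)]
  exact ⟨_, heq ▸ hp⟩

/-- Let `(E_m)` be i.i.d. exponential rate-1 random variables on a probability space and
`W = (2 / π²) ∑' m, E m / (2m + 1)²` (the PG(1,0) random variable). Then for every `t ≥ 0`,
`E[exp (-t W)] = ∏_{m=1}^∞ (1 + 2 t / (π² (2m - 1)²))⁻¹` (indexed here by `m : ℕ` with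
factor `(2m + 1)²`), and the product is multipliable. -/
theorem pg_mgf_eq_tprod
    {Ω : Type*} [MeasurableSpace Ω] (μ : Measure Ω) [IsProbabilityMeasure μ]
    (E : ℕ → Ω → ℝ) (hmeas : ∀ m, Measurable (E m))
    (hindep : iIndepFun E μ)
    (hdist : ∀ m, μ.map (E m) = expMeasure 1)
    (t : ℝ) (ht : 0 ≤ t) :
    Multipliable (fun m : ℕ => (1 + 2 * t / (π ^ 2 * (2 * (m : ℝ) + 1) ^ 2))⁻¹) ∧
      ∫ ω, Real.exp (-t * ((2 / π ^ 2) * ∑' m : ℕ, E m ω / (2 * (m : ℝ) + 1) ^ 2)) ∂μ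
        = ∏' m : ℕ, (1 + 2 * t / (π ^ 2 * (2 * (m : ℝ) + 1) ^ 2))⁻¹ := by
  have hπ : (0:ℝ) < π ^ 2 := by positivity
  set s : ℕ → ℝ := fun m => 2 * t / (π ^ 2 * (2 * (m : ℝ) + 1) ^ 2) with hs_def
  have hs0 : ∀ m, 0 ≤ s m := fun m => by positivity
  have hssum : Summable s := by
    have := summable_inv_sq'.mul_left (2 * t / π ^ 2)
    apply this.congr
    intro m
    simp only [hs_def]
    field_simp
  have hmult : Multipliable (fun m : ℕ => (1 + s m)⁻¹) := multipliable_aux hs0 hssum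
  refine ⟨hmult, ?_⟩
  -- the independent factors
  set g : ℕ → Ω → ℝ := fun m ω => Real.exp (-(s m * E m ω)) with hg_def
  have hgm : ∀ m, Measurable (g m) := fun m =>
    (((hmeas m).const_mul (s m)).neg).exp
  have hgindep : iIndepFun g μ :=
    hindep.comp (fun m x => Real.exp (-(s m * x)))
      (fun m => ((measurable_id.const_mul (s m)).neg).exp)
  -- single factor integral
  have hgint : ∀ m, ∫ ω, g m ω ∂μ = (1 + s m)⁻¹ := by
    intro m
    have hmr : Measurable fun x : ℝ => Real.exp (-(s m * x)) := by fun_prop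
    have h := integral_map (μ := μ) (φ := E m) (f := fun x : ℝ => Real.exp (-(s m * x)))
      (hmeas m).aemeasurable hmr.aestronglyMeasurable
    rw [hdist m, exp_laplace (hs0 m)] at h
    exact h.symm
  -- finite products
  have hFmeas : ∀ n, Measurable (fun ω => ∏ i ∈ Finset.range n, g i ω) := by
    intro n
    exact Finset.measurable_prod _ (fun i _ => hgm i)
  have hprod : ∀ n, ∫ ω, ∏ i ∈ Finset.range n, g i ω ∂μ
      = ∏ i ∈ Finset.range n, (1 + s i)⁻¹ := by
    intro n
    induction n with
    | zero => simp
    | succ n ih =>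
      have hind := hgindep.indepFun_prod_range_succ hgm n
      have h1 : ∫ ω, ∏ i ∈ Finset.range (n+1), g i ω ∂μ
          = ∫ ω, ((∏ i ∈ Finset.range n, g i) * g n) ω ∂μ := by
        apply integral_congr_ae
        filter_upwards with ω
        simp [Finset.prod_range_succ, Finset.prod_apply]
      have hA : AEStronglyMeasurable (∏ j ∈ Finset.range n, g j) μ := by
        have he : (∏ j ∈ Finset.range n, g j) = fun ω => ∏ j ∈ Finset.range n, g j ω := by
          funext ω; simp [Finset.prod_apply]
        rw [he]; exact (hFmeas n).aestronglyMeasurable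
      rw [h1, IndepFun.integral_mul_eq_mul_integral hind hA (hgm n).aestronglyMeasurable]
      have h2 : ∫ ω, (∏ i ∈ Finset.range n, g i) ω ∂μ
          = ∫ ω, ∏ i ∈ Finset.range n, g i ω ∂μ := by
        apply integral_congr_ae; filter_upwards with ω; simp [Finset.prod_apply]
      rw [show (∫ ω, (∏ i ∈ Finset.range n, g i) ω ∂μ) * (∫ ω, g n ω ∂μ)
          = (∫ ω, ∏ i ∈ Finset.range n, g i ω ∂μ) * (∫ ω, g n ω ∂μ) by rw [h2]]
      rw [ih, hgint n, Finset.prod_range_succ]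
  -- a.e. nonnegativity
  have hEnn : ∀ᵐ ω ∂μ, ∀ m, 0 ≤ E m ω := by
    rw [ae_all_iff]
    intro m
    exact (ae_map_iff (hmeas m).aemeasurable measurableSet_Ici).mp
      ((hdist m) ▸ exp_ae_nonneg)
  -- a.e. summability
  have hsumm : ∀ᵐ ω ∂μ, Summable (fun m : ℕ => E m ω / (2 * (m : ℝ) + 1) ^ 2) := by
    set c : ℕ → ℝ≥0∞ := fun m => ENNReal.ofReal (((2 * (m:ℝ) + 1) ^ 2)⁻¹) with hc_def
    have hEnorm : ∀ m, ∫⁻ ω, (‖E m ω‖₊ : ℝ≥0∞) ∂μ = 1 := by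
      intro m
      rw [← exp_lintegral_nnnorm, ← hdist m,
        lintegral_map measurable_nnnorm.coe_nnreal_ennreal (hmeas m)]
    have hlint : ∫⁻ ω, ∑' m, c m * (‖E m ω‖₊ : ℝ≥0∞) ∂μ = ∑' m, c m := by
      rw [lintegral_tsum (fun m => ((hmeas m).nnnorm.coe_nnreal_ennreal.const_mul _).aemeasurable)]
      congr 1
      funext m
      rw [lintegral_const_mul _ (hmeas m).nnnorm.coe_nnreal_ennreal, hEnorm m, mul_one]
    have hfin : ∑' m, c m ≠ ⊤ := by
      rw [← ENNReal.ofReal_tsum_of_nonneg (fun m => by positivity) summable_inv_sq']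
      exact ENNReal.ofReal_ne_top
    have hae : ∀ᵐ ω ∂μ, ∑' m, c m * (‖E m ω‖₊ : ℝ≥0∞) < ⊤ := by
      apply ae_lt_top (Measurable.ennreal_tsum (fun m => (hmeas m).nnnorm.coe_nnreal_ennreal.const_mul _))
      rw [hlint]; exact hfin
    filter_upwards [hae] with ω hω
    have h1 : Summable (fun m => ((c m) * (‖E m ω‖₊ : ℝ≥0∞)).toReal) :=
      ENNReal.summable_toReal hω.ne
    apply Summable.of_norm
    apply h1.congr
    intro m
    rw [ENNReal.toReal_mul, hc_def, ENNReal.toReal_ofReal (by positivity)]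
    simp only [ENNReal.coe_toReal, coe_nnnorm]
    have habs : |E m ω / (2*(m:ℝ)+1)^2| = ((2*(m:ℝ)+1)^2)⁻¹ * |E m ω| := by
      rw [abs_div, abs_of_pos (show (0:ℝ) < (2*(m:ℝ)+1)^2 by positivity), div_eq_inv_mul]
    simp only [Real.norm_eq_abs]
    rw [habs]
  -- dominated convergence
  have hbound : ∀ n, ∀ᵐ ω ∂μ, ‖∏ i ∈ Finset.range n, g i ω‖ ≤ (1 : ℝ) := by
    intro n
    filter_upwards [hEnn] with ω h0
    have hnn : ∀ i ∈ Finset.range n, (0:ℝ) ≤ g i ω := fun i _ => (Real.exp_pos _).le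
    rw [Real.norm_eq_abs, abs_of_nonneg (Finset.prod_nonneg hnn)]
    apply Finset.prod_le_one hnn
    intro i _
    rw [hg_def]
    simp only
    rw [Real.exp_le_one_iff]
    have := mul_nonneg (hs0 i) (h0 i)
    linarith
  have hlim : ∀ᵐ ω ∂μ, Filter.Tendsto (fun n => ∏ i ∈ Finset.range n, g i ω)
      Filter.atTop (nhds (Real.exp (-t * ((2 / π ^ 2) *
        ∑' m : ℕ, E m ω / (2 * (m : ℝ) + 1) ^ 2)))) := by
    filter_upwards [hsumm] with ω hsum
    have heq : ∀ n, ∏ i ∈ Finset.range n, g i ω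
        = Real.exp (-t * ((2 / π ^ 2) * ∑ i ∈ Finset.range n, E i ω / (2 * (i:ℝ) + 1) ^ 2)) := by
      intro n
      rw [← Real.exp_sum]
      congr 1
      rw [Finset.mul_sum, Finset.mul_sum]
      apply Finset.sum_congr rfl
      intro i _
      simp only [hs_def]
      field_simp
    simp_rw [heq]
    have hcont : Continuous (fun y : ℝ => Real.exp (-t * ((2 / π ^ 2) * y))) := by
      continuity
    exact (hcont.tendsto _).comp hsum.hasSum.tendsto_sum_nat
  have h1 : Filter.Tendsto (fun n => ∫ ω, ∏ i ∈ Finset.range n, g i ω ∂μ)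
      Filter.atTop (nhds (∫ ω, Real.exp (-t * ((2 / π ^ 2) *
        ∑' m : ℕ, E m ω / (2 * (m : ℝ) + 1) ^ 2)) ∂μ)) := by
    apply tendsto_integral_of_dominated_convergence (fun _ => (1:ℝ))
      (fun n => (hFmeas n).aestronglyMeasurable) (integrable_const 1) hbound hlim
  have h2 : Filter.Tendsto (fun n => ∏ i ∈ Finset.range n, (1 + s i)⁻¹)
      Filter.atTop (nhds (∏' m, (1 + s m)⁻¹)) :=
    hmult.hasProd.tendsto_prod_nat
  simp_rw [hprod] at h1
  exact tendsto_nhds_unique h1 h2
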